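/- If a p-adic integer α is the image of a rational number under the canonical embedding ℚ ∩ ℤ_p → ℤ_p, then α is not a p-adic Liouville number. -/

import Mathlib

open Filter

/-- A `p`-adic integer `α` is a `p`-adic Liouville number if
`liminf ‖n - α‖^(1/n) < 1` or `liminf ‖n + α‖^(1/n) < 1`. -/
def IsPadicLiouville (p : ℕ) [Fact p.Prime] (α : ℤ_[p]) : Prop :=
  liminf (fun n : ℕ => ‖(n : ℤ_[p]) - α‖ ^ ((1 : ℝ) / n)) atTop < 1 ∨
  liminf (fun n : ℕ => ‖(n : ℤ_[p]) + α‖ ^ ((1 : ℝ) / n)) atTop < 1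

/-- For a nonzero integer `m`, `‖m‖_p ≥ 1/|m|`. -/
lemma norm_int_ge (p : ℕ) [hp : Fact p.Prime] (m : ℤ) (hm : m ≠ 0) :
    (|(m : ℝ)|)⁻¹ ≤ ‖(m : ℚ_[p])‖ := by
  have hm' : ((m : ℚ_[p])) ≠ 0 := by exact_mod_cast hm
  rw [Padic.norm_eq_zpow_neg_valuation hm', Padic.valuation_intCast]
  have hdvd : (p : ℤ) ^ padicValInt p m ∣ m := padicValInt_dvd m
  have hle : (p : ℤ) ^ padicValInt p m ≤ |m| :=
    Int.le_of_dvd (abs_pos.mpr hm) ((dvd_abs _ _).mpr hdvd)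
  have hple : ((p : ℝ)) ^ (padicValInt p m) ≤ |(m : ℝ)| := by
    rw [← Int.cast_abs]
    exact_mod_cast hle
  have hppos : (0 : ℝ) < (p : ℝ) ^ (padicValInt p m) :=
    pow_pos (by exact_mod_cast hp.out.pos) _
  rw [zpow_neg, zpow_natCast]
  exact inv_anti₀ hppos hple

/-- Key estimate: if `α` comes from a rational, then eventually
`‖n - α‖ ≥ (n^2)⁻¹`. -/
lemma eventually_norm_ge (p : ℕ) [Fact p.Prime] (α : ℤ_[p]) (q : ℚ)
    (hq : (q : ℚ_[p]) = (α : ℚ_[p])) :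
    ∀ᶠ n : ℕ in atTop, ((n : ℝ) ^ 2)⁻¹ ≤ ‖(n : ℤ_[p]) - α‖ := by
  set a := q.num with ha
  set b := (q.den : ℤ) with hbb
  have hb0 : (0 : ℤ) < b := by rw [hbb]; exact_mod_cast q.pos
  filter_upwards [eventually_ge_atTop (max 1 (b + |a|)).toNat] with n hn
  have hn' : max 1 (b + |a|) ≤ (n : ℤ) := by
    calc max 1 (b + |a|) ≤ ((max 1 (b + |a|)).toNat : ℤ) := Int.self_le_toNat _
    _ ≤ n := by exact_mod_cast hn
  have hn1 : (1 : ℤ) ≤ n := le_trans (le_max_left _ _) hn'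
  have hnba : b + |a| ≤ (n : ℤ) := le_trans (le_max_right _ _) hn'
  -- the integer N = n*b - a is nonzero
  have hNpos : 0 < (n : ℤ) * b - a := by
    nlinarith [neg_abs_le a, le_abs_self a, abs_nonneg a]
  have hN0 : (n : ℤ) * b - a ≠ 0 := hNpos.ne'
  -- bound |N| ≤ n^2
  have hNbound : |(n : ℤ) * b - a| ≤ (n : ℤ) ^ 2 := by
    rw [abs_of_pos hNpos]
    nlinarith [neg_abs_le a, le_abs_self a, abs_nonneg a]
  -- compute the norm
  have hQ : ((n : ℚ) - q) * ((q.den : ℤ) : ℚ) = (((n : ℤ) * b - a : ℤ) : ℚ) := by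
    push_cast
    rw [sub_mul, Rat.mul_den_eq_num]
    rw [hbb]
    push_cast
    ring
  have key : ‖(((n : ℤ) * b - a : ℤ) : ℚ_[p])‖ = ‖(n : ℤ_[p]) - α‖ * ‖((b : ℤ) : ℚ_[p])‖ := by
    have hcoe : ‖(n : ℤ_[p]) - α‖ = ‖((n : ℚ_[p]) - (α : ℚ_[p]))‖ := by
      rw [PadicInt.norm_def, PadicInt.coe_sub, PadicInt.coe_natCast]
    rw [hcoe, ← norm_mul]
    congr 1
    rw [← hq]
    exact_mod_cast (congrArg (fun x : ℚ => (x : ℚ_[p])) hQ).symm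
  have hble : ‖((b : ℤ) : ℚ_[p])‖ ≤ 1 := Padic.norm_int_le_one b
  have hbnn : (0 : ℝ) ≤ ‖(n : ℤ_[p]) - α‖ := norm_nonneg _
  have hmain : ‖(((n : ℤ) * b - a : ℤ) : ℚ_[p])‖ ≤ ‖(n : ℤ_[p]) - α‖ := by
    calc ‖(((n : ℤ) * b - a : ℤ) : ℚ_[p])‖ = ‖(n : ℤ_[p]) - α‖ * ‖((b : ℤ) : ℚ_[p])‖ := key
    _ ≤ ‖(n : ℤ_[p]) - α‖ * 1 := mul_le_mul_of_nonneg_left hble hbnn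
    _ = _ := mul_one _
  refine le_trans (le_trans ?_ (norm_int_ge p _ hN0)) hmain
  have h1 : (0 : ℝ) < |(((n : ℤ) * b - a : ℤ) : ℝ)| := by
    rw [abs_pos]; exact_mod_cast hN0
  apply inv_anti₀ h1
  rw [← Int.cast_abs]
  exact_mod_cast hNbound

/-- One-sided version of the theorem. -/
lemma not_liminf_lt (p : ℕ) [Fact p.Prime] (α : ℤ_[p]) (q : ℚ)
    (hq : (q : ℚ_[p]) = (α : ℚ_[p])) :
    ¬ liminf (fun n : ℕ => ‖(n : ℤ_[p]) - α‖ ^ ((1 : ℝ) / n)) atTop < 1 := by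
  intro hlt
  set f : ℕ → ℝ := fun n => ‖(n : ℤ_[p]) - α‖ ^ ((1 : ℝ) / n) with hf
  have hf0 : ∀ n, 0 ≤ f n := fun n => Real.rpow_nonneg (norm_nonneg _) _
  -- the comparison sequence g n = (n^2)^(-1/n) tends to 1
  set g : ℕ → ℝ := fun n => (((n : ℝ)) ^ ((1 : ℝ) / n))⁻¹ ^ 2 with hg
  have hgt : Tendsto g atTop (nhds 1) := by
    have h1 : Tendsto (fun n : ℕ => ((n : ℝ)) ^ ((1 : ℝ) / n)) atTop (nhds 1) :=
      tendsto_rpow_div.comp tendsto_natCast_atTop_atTop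
    have : Tendsto g atTop (nhds ((1 : ℝ)⁻¹ ^ 2)) := (h1.inv₀ one_ne_zero).pow 2
    simpa using this
  -- eventually f n ≥ g n
  have hfg : ∀ᶠ n : ℕ in atTop, g n ≤ f n := by
    filter_upwards [eventually_norm_ge p α q hq, eventually_ge_atTop 1] with n hge hn1
    have hn0 : (0 : ℝ) < n := by exact_mod_cast hn1
    have hgeq : g n = (((n : ℝ) ^ 2)⁻¹) ^ ((1 : ℝ) / n) := by
      show (((n : ℝ)) ^ ((1 : ℝ) / n))⁻¹ ^ 2 = (((n : ℝ) ^ 2)⁻¹) ^ ((1 : ℝ) / n)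
      rw [Real.inv_rpow (by positivity), inv_pow]
      congr 1
      rw [← Real.rpow_natCast (((n : ℝ)) ^ ((1 : ℝ) / n)) 2, ← Real.rpow_mul hn0.le,
        ← Real.rpow_natCast ((n : ℝ)) 2, ← Real.rpow_mul hn0.le]
      congr 1
      push_cast
      ring
    rw [hgeq, hf]
    exact Real.rpow_le_rpow (by positivity) hge (by positivity)
  -- get a contradiction
  obtain ⟨c, hc1, hc2⟩ := exists_between hlt
  have hbd : IsBoundedUnder (· ≤ ·) atTop f := by
    refine ⟨1, eventually_map.mpr (Eventually.of_forall fun n => ?_)⟩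
    calc f n = ‖(n : ℤ_[p]) - α‖ ^ ((1 : ℝ) / n) := rfl
    _ ≤ 1 ^ ((1 : ℝ) / n) :=
      Real.rpow_le_rpow (norm_nonneg _) (PadicInt.norm_le_one _) (by positivity)
    _ = 1 := Real.one_rpow _
  have hcob : IsCoboundedUnder (· ≥ ·) atTop f := hbd.isCoboundedUnder_ge
  have hfreq : ∃ᶠ n in atTop, f n < c := frequently_lt_of_liminf_lt hcob hc1
  have hev : ∀ᶠ n in atTop, c < g n := hgt.eventually_const_lt hc2
  have : ∃ᶠ n in atTop, f n < c ∧ c < g n ∧ g n ≤ f n :=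
    (hfreq.and_eventually (hev.and hfg)).mono (by tauto)
  obtain ⟨n, h1, h2, h3⟩ := this.exists
  linarith

/-- A `p`-adic integer coming from a rational number is not a `p`-adic Liouville number. -/
theorem not_isPadicLiouville_of_rat (p : ℕ) [Fact p.Prime] (α : ℤ_[p])
    (h : ∃ q : ℚ, ((q : ℚ_[p]) = (α : ℚ_[p]))) :
    ¬ IsPadicLiouville p α := by
  obtain ⟨q, hq⟩ := h
  rintro (h1 | h2)
  · exact not_liminf_lt p α q hq h1
  · refine not_liminf_lt p (-α) (-q) ?_ ?_
    · push_cast [hq]; ring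
    · convert h2 using 3 with n
      rw [sub_neg_eq_add]
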